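/- If (x_n) is Fejér monotone with respect to a nonempty closed affine subspace C of a real Hilbert space, then P_C x_n = P_C x_0 for all n, i.e., the projected sequence is constant. -/

import Mathlib

open Filter Topology

section Aux

variable {X : Type*} [NormedAddCommGroup X] [InnerProductSpace ℝ X]

private lemma expand_sq (u v : X) (t : ℝ) :
    ‖u - t • v‖ ^ 2 = ‖u‖ ^ 2 - 2 * t * (inner ℝ u v : ℝ) + t ^ 2 * ‖v‖ ^ 2 := by
  rw [norm_sub_sq_real, real_inner_smul_right, norm_smul]
  simp only [Real.norm_eq_abs, mul_pow, sq_abs]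
  ring

private lemma proj_orth (C : Set X)
    (hAff : ∀ a ∈ C, ∀ b ∈ C, ∀ t : ℝ, t • a + (1 - t) • b ∈ C)
    (P : X → X) (hP : ∀ z : X, P z ∈ C ∧ ∀ c ∈ C, ‖z - P z‖ ≤ ‖z - c‖)
    (z : X) : ∀ c ∈ C, (inner ℝ (z - P z) (c - P z) : ℝ) = 0 := by
  intro c hc
  set p := P z with hp
  set a : ℝ := inner ℝ (z - p) (c - p) with ha
  by_contra hne
  have hcp : c ≠ p := by
    intro h; apply hne; simp [ha, h]
  have hBpos : (0:ℝ) < ‖c - p‖ ^ 2 := by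
    have h0 : c - p ≠ 0 := sub_ne_zero.mpr hcp
    exact pow_pos (norm_pos_iff.mpr h0) 2
  set B : ℝ := ‖c - p‖ ^ 2 with hB
  set t : ℝ := a / B with ht
  have hmem : t • c + (1 - t) • p ∈ C := hAff c hc p (hP z).1 t
  have hle : ‖z - p‖ ≤ ‖z - (t • c + (1 - t) • p)‖ := (hP z).2 _ hmem
  have hrw : z - (t • c + (1 - t) • p) = (z - p) - t • (c - p) := by
    simp only [smul_sub, sub_smul, one_smul]; abel
  have hsq : ‖z - p‖ ^ 2 ≤ ‖(z - p) - t • (c - p)‖ ^ 2 := by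
    rw [← hrw]; exact pow_le_pow_left₀ (norm_nonneg _) hle 2
  rw [expand_sq] at hsq
  rw [← ha, ← hB] at hsq
  have ht2 : t ^ 2 * B = t * a := by
    rw [ht]; field_simp
  rw [ht2] at hsq
  have hta : 0 < t * a := by
    have h' : t * a = a ^ 2 / B := by rw [ht]; field_simp
    rw [h']
    have ha2 : (0:ℝ) < a ^ 2 := by positivity
    positivity
  nlinarith

private lemma proj_unique (C : Set X)
    (hAff : ∀ a ∈ C, ∀ b ∈ C, ∀ t : ℝ, t • a + (1 - t) • b ∈ C)
    (P : X → X) (hP : ∀ z : X, P z ∈ C ∧ ∀ c ∈ C, ‖z - P z‖ ≤ ‖z - c‖)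
    (z p : X) (hpC : p ∈ C) (horth : ∀ c ∈ C, (inner ℝ (z - p) (c - p) : ℝ) = 0) :
    P z = p := by
  have h1 : (inner ℝ (z - P z) (p - P z) : ℝ) = 0 :=
    proj_orth C hAff P hP z p hpC
  have h2 : (inner ℝ (z - p) (P z - p) : ℝ) = 0 :=
    horth (P z) (hP z).1
  have esplit : (inner ℝ (P z - p) (P z - p) : ℝ)
      = inner ℝ (P z - z) (P z - p) + inner ℝ (z - p) (P z - p) := by
    rw [← inner_add_left]; congr 1; abel
  have e1 : (inner ℝ (P z - z) (P z - p) : ℝ) = 0 := by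
    rw [show (P z - z : X) = -(z - P z) by abel,
        show (P z - p : X) = -(p - P z) by abel, inner_neg_neg, h1]
  have key : ‖P z - p‖ ^ 2 = 0 := by
    rw [← real_inner_self_eq_norm_sq, esplit, e1, h2, add_zero]
  have : P z - p = 0 := by
    have hnorm : ‖P z - p‖ = 0 := by
      exact (pow_eq_zero_iff (two_ne_zero)).mp key
    exact norm_eq_zero.mp hnorm
  exact sub_eq_zero.mp this

end Aux

theorem fejer_affine_shadow_constant {X : Type*} [NormedAddCommGroup X]
    [InnerProductSpace ℝ X] [CompleteSpace X]
    (C : Set X) (hCne : C.Nonempty) (hCcl : IsClosed C)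
    (hAff : ∀ a ∈ C, ∀ b ∈ C, ∀ t : ℝ, t • a + (1 - t) • b ∈ C)
    (P : X → X) (hP : ∀ z : X, P z ∈ C ∧ ∀ c ∈ C, ‖z - P z‖ ≤ ‖z - c‖)
    (x : ℕ → X) (hFej : ∀ c ∈ C, ∀ n : ℕ, ‖x (n + 1) - c‖ ≤ ‖x n - c‖) :
    ∀ n : ℕ, P (x n) = P (x 0) := by
  intro n
  induction n with
  | zero => rfl
  | succ n ih =>
    rw [← ih]
    set p := P (x n) with hp
    have hpC : p ∈ C := (hP (x n)).1
    apply proj_unique C hAff P hP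
    · exact hpC
    · -- ∀ c ∈ C, ⟪x (n+1) - p, c - p⟫ = 0
      intro c hc
      set a : ℝ := inner ℝ (x (n + 1) - p) (c - p) with ha
      by_contra hne
      set K : ℝ := ‖x n - p‖ ^ 2 - ‖x (n + 1) - p‖ ^ 2 with hK
      set t : ℝ := -(|K| + 1) / (2 * a) with ht
      have hmem : t • c + (1 - t) • p ∈ C := hAff c hc p hpC t
      have hle : ‖x (n + 1) - (t • c + (1 - t) • p)‖ ≤ ‖x n - (t • c + (1 - t) • p)‖ :=
        hFej _ hmem n
      have hrw1 : x (n + 1) - (t • c + (1 - t) • p) = (x (n + 1) - p) - t • (c - p) := by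
        simp only [smul_sub, sub_smul, one_smul]; abel
      have hrw2 : x n - (t • c + (1 - t) • p) = (x n - p) - t • (c - p) := by
        simp only [smul_sub, sub_smul, one_smul]; abel
      have hsq : ‖(x (n + 1) - p) - t • (c - p)‖ ^ 2 ≤ ‖(x n - p) - t • (c - p)‖ ^ 2 := by
        rw [← hrw1, ← hrw2]
        exact pow_le_pow_left₀ (norm_nonneg _) hle 2
      rw [expand_sq, expand_sq] at hsq
      have horthn : (inner ℝ (x n - p) (c - p) : ℝ) = 0 :=
        proj_orth C hAff P hP (x n) c hc
      rw [horthn, ← ha] at hsq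
      -- hsq : ‖x(n+1)-p‖^2 - 2*t*a + t^2*B ≤ ‖x n - p‖^2 - 2*t*0 + t^2*B
      have hta : -2 * t * a ≤ K := by nlinarith [hsq]
      have hval : -2 * t * a = |K| + 1 := by
        rw [ht]; field_simp
      have : |K| + 1 ≤ K := by rw [← hval]; exact hta
      have hKK : K ≤ |K| := le_abs_self K
      linarith
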